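/- arXiv:2405.13439 — 2 statements merged into one kernel-verified Lean document; each statement's English description precedes it below -/
import Mathlib

section
/- For every permutation π_n ∈ S_n, out of the (n+1)² insertion cells in the graphical representation, exactly (n+1)(n − D_n) cells produce descent increment +1, where D_n is the number of descents of π_n. -/
/-- Number of descents of a permutation of `Fin n`. -/
def descNum {n : ℕ} (σ : Equiv.Perm (Fin n)) : ℕ :=
  (Finset.univ.filter fun p : Fin n × Fin n =>
    (p.1 : ℕ) + 1 = (p.2 : ℕ) ∧ σ p.2 < σ p.1).card

/-- Insertion of a point in cell `(k, ℓ)` of the graphical representation of `σ`: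
the new permutation sends `k ↦ ℓ` and otherwise acts as `σ` on the remaining
positions/values (via `succAbove`). -/
def insertPerm {n : ℕ} (σ : Equiv.Perm (Fin n)) (k ℓ : Fin (n + 1)) :
    Equiv.Perm (Fin (n + 1)) :=
  (finSuccEquiv' k).trans ((Equiv.optionCongr σ).trans (finSuccEquiv' ℓ).symm)


open Finset

/-- word of a permutation as a ℕ-valued function -/
def wd {n : ℕ} (σ : Equiv.Perm (Fin n)) : ℕ → ℕ :=
  fun i => if h : i < n then (σ ⟨i, h⟩ : ℕ) else 0

/-- bump values `≥ t` up by one -/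
def bump (t v : ℕ) : ℕ := if v < t then v else v + 1

lemma bump_lt_bump {t v w : ℕ} : bump t v < bump t w ↔ v < w := by
  unfold bump; split_ifs <;> omega

lemma lt_bump {t v : ℕ} : t < bump t v ↔ t ≤ v := by
  unfold bump; split_ifs <;> omega

lemma bump_lt {t v : ℕ} : bump t v < t ↔ v < t := by
  unfold bump; split_ifs <;> omega

lemma wd_lt {n : ℕ} (σ : Equiv.Perm (Fin n)) {i : ℕ} (h : i < n) : wd σ i < n := by
  simp only [wd, dif_pos h]; exact (σ ⟨i, h⟩).isLt

lemma descNum_eq_card {n : ℕ} (σ : Equiv.Perm (Fin n)) :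
    descNum σ = ((Finset.range (n - 1)).filter fun i => wd σ (i + 1) < wd σ i).card := by
  apply Finset.card_bij (fun p _ => (p.1 : ℕ))
  · rintro ⟨p1, p2⟩ hp
    simp only [mem_filter, mem_univ, true_and] at hp
    obtain ⟨h1, h2⟩ := hp
    have hlt : (p1 : ℕ) < n - 1 := by have := p2.isLt; omega
    simp only [mem_filter, mem_range]
    refine ⟨hlt, ?_⟩
    have e1 : wd σ ((p1 : ℕ) + 1) = σ p2 := by
      simp only [wd, h1, dif_pos p2.isLt]
    have e2 : wd σ (p1 : ℕ) = σ p1 := by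
      simp only [wd, dif_pos p1.isLt]
    rw [e1, e2]; exact_mod_cast h2
  · rintro ⟨p1, p2⟩ hp ⟨q1, q2⟩ hq h
    simp only [mem_filter, mem_univ, true_and] at hp hq
    have : p1 = q1 := Fin.ext h
    subst this
    have : p2 = q2 := Fin.ext (by omega)
    simp [this]
  · intro i hi
    simp only [mem_filter, mem_range] at hi
    obtain ⟨hi1, hi2⟩ := hi
    have h1 : i < n := by omega
    have h2 : i + 1 < n := by omega
    have e1 : wd σ (i + 1) = σ ⟨i + 1, h2⟩ := by simp [wd, dif_pos h2]
    have e2 : wd σ i = σ ⟨i, h1⟩ := by simp [wd, dif_pos h1]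
    rw [e1, e2] at hi2
    have hm : (⟨i, h1⟩, (⟨i + 1, h2⟩ : Fin n)) ∈ Finset.univ.filter fun p : Fin n × Fin n =>
        (p.1 : ℕ) + 1 = (p.2 : ℕ) ∧ σ p.2 < σ p.1 := by
      simp only [mem_filter, mem_univ, true_and]
      exact hi2
    exact ⟨_, hm, rfl⟩

lemma coe_succAbove {n : ℕ} (p : Fin (n + 1)) (i : Fin n) :
    (p.succAbove i : ℕ) = bump (p : ℕ) (i : ℕ) := by
  unfold Fin.succAbove bump
  rcases lt_or_ge (i.castSucc) p with h | h
  · rw [if_pos h, if_pos]; · rfl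
    · exact_mod_cast h
  · rw [if_neg (not_lt.mpr h), if_neg]; · rfl
    · exact_mod_cast not_lt.mpr h

lemma insertPerm_self {n : ℕ} (σ : Equiv.Perm (Fin n)) (k ℓ : Fin (n + 1)) :
    insertPerm σ k ℓ k = ℓ := by
  simp [insertPerm, finSuccEquiv'_at, finSuccEquiv'_symm_none]

lemma insertPerm_succAbove {n : ℕ} (σ : Equiv.Perm (Fin n)) (k ℓ : Fin (n + 1)) (i : Fin n) :
    insertPerm σ k ℓ (k.succAbove i) = ℓ.succAbove (σ i) := by
  simp [insertPerm, finSuccEquiv'_succAbove, finSuccEquiv'_symm_some]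

lemma wd_insert_at {n : ℕ} (σ : Equiv.Perm (Fin n)) (k ℓ : Fin (n + 1)) :
    wd (insertPerm σ k ℓ) (k : ℕ) = (ℓ : ℕ) := by
  have hk : (k : ℕ) < n + 1 := k.isLt
  simp only [wd, dif_pos hk]
  have : (⟨(k : ℕ), hk⟩ : Fin (n + 1)) = k := Fin.ext rfl
  rw [this, insertPerm_self]

lemma wd_insert_lt {n : ℕ} (σ : Equiv.Perm (Fin n)) (k ℓ : Fin (n + 1)) {i : ℕ}
    (h : i < (k : ℕ)) : wd (insertPerm σ k ℓ) i = bump (ℓ : ℕ) (wd σ i) := by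
  have hin : i < n := by have := k.isLt; omega
  have hin1 : i < n + 1 := by omega
  have hsa : k.succAbove ⟨i, hin⟩ = ⟨i, hin1⟩ := by
    apply Fin.ext
    rw [coe_succAbove]
    simp only [bump, if_pos h]
  have : wd (insertPerm σ k ℓ) i = ((insertPerm σ k ℓ) ⟨i, hin1⟩ : ℕ) := by
    simp only [wd, dif_pos hin1]
  rw [this, ← hsa, insertPerm_succAbove, coe_succAbove]
  simp [wd, dif_pos hin]

lemma wd_insert_gt {n : ℕ} (σ : Equiv.Perm (Fin n)) (k ℓ : Fin (n + 1)) {i : ℕ}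
    (h1 : (k : ℕ) < i) (h2 : i ≤ n) : wd (insertPerm σ k ℓ) i = bump (ℓ : ℕ) (wd σ (i - 1)) := by
  have hin : i - 1 < n := by omega
  have hin1 : i < n + 1 := by omega
  have hsa : k.succAbove ⟨i - 1, hin⟩ = ⟨i, hin1⟩ := by
    apply Fin.ext
    rw [coe_succAbove]
    simp only [bump]
    rw [if_neg (by omega)]
    omega
  have : wd (insertPerm σ k ℓ) i = ((insertPerm σ k ℓ) ⟨i, hin1⟩ : ℕ) := by
    simp only [wd, dif_pos hin1]
  rw [this, ← hsa, insertPerm_succAbove, coe_succAbove]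
  simp [wd, dif_pos hin]

/-- broken descent contribution -/
def oldN {n : ℕ} (σ : Equiv.Perm (Fin n)) (k : Fin (n + 1)) : ℕ :=
  if 1 ≤ (k : ℕ) ∧ (k : ℕ) < n ∧ wd σ (k : ℕ) < wd σ ((k : ℕ) - 1) then 1 else 0

/-- new descent contributions -/
def newN {n : ℕ} (σ : Equiv.Perm (Fin n)) (k ℓ : Fin (n + 1)) : ℕ :=
  (if 1 ≤ (k : ℕ) ∧ (ℓ : ℕ) ≤ wd σ ((k : ℕ) - 1) then 1 else 0) +
  (if (k : ℕ) < n ∧ wd σ (k : ℕ) < (ℓ : ℕ) then 1 else 0)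

lemma key {n : ℕ} (σ : Equiv.Perm (Fin n)) (k ℓ : Fin (n + 1)) :
    descNum (insertPerm σ k ℓ) + oldN σ k = descNum σ + newN σ k ℓ := by
  have hcn : (k : ℕ) ≤ n := Nat.lt_succ_iff.mp k.isLt
  rw [descNum_eq_card, descNum_eq_card, Finset.card_filter, Finset.card_filter]
  set g := wd (insertPerm σ k ℓ) with hg
  set f := wd σ with hf
  set c := (k : ℕ) with hc
  have hrn : n + 1 - 1 = n := rfl
  rw [hrn]
  have hgat : g c = (ℓ : ℕ) := wd_insert_at σ k ℓ
  have hglt : ∀ i, i < c → g i = bump (ℓ : ℕ) (f i) := fun i hi => wd_insert_lt σ k ℓ hi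
  have hggt : ∀ i, c < i → i ≤ n → g i = bump (ℓ : ℕ) (f (i - 1)) :=
    fun i h1 h2 => wd_insert_gt σ k ℓ h1 h2
  rcases Nat.eq_zero_or_pos n with hn0 | hn1
  · subst hn0
    have hc0 : c = 0 := by omega
    simp [oldN, newN, ← hc, hc0]
  obtain ⟨m, rfl⟩ : ∃ m, n = m + 1 := ⟨n - 1, by omega⟩
  have hm1 : m + 1 - 1 = m := rfl
  rw [hm1]
  rcases Nat.eq_zero_or_pos c with hc0 | hc1
  · -- k = 0
    rw [Finset.sum_range_succ' (fun i => if g (i + 1) < g i then 1 else 0)]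
    have e1 : ∀ i ∈ Finset.range m,
        (if g (i + 1 + 1) < g (i + 1) then 1 else 0) = (if f (i + 1) < f i then 1 else 0) := by
      intro i hi
      rw [Finset.mem_range] at hi
      rw [hggt (i + 1) (by omega) (by omega), hggt (i + 1 + 1) (by omega) (by omega)]
      simp only [Nat.add_sub_cancel, bump_lt_bump]
    rw [Finset.sum_congr rfl e1]
    have e0 : (if g (0 + 1) < g 0 then 1 else 0) = newN σ k ℓ := by
      have h1 : g 0 = (ℓ : ℕ) := by rw [hc0] at hgat; exact hgat
      have h2 : g (0 + 1) = bump (ℓ : ℕ) (f 0) := hggt 1 (by omega) (by omega)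
      have hck : (k : ℕ) = 0 := by omega
      simp only [h1, h2, bump_lt, newN, hck, ← hf]
      rw [if_neg (show ¬(1 ≤ 0 ∧ (ℓ : ℕ) ≤ f (0 - 1)) by omega), Nat.zero_add]
      by_cases hb : f 0 < (ℓ : ℕ)
      · simp [hb]
      · simp [hb]
    rw [e0]
    have : oldN σ k = 0 := by simp [oldN, ← hc, hc0]
    omega
  rcases Nat.lt_or_ge c (m + 1) with hcltn | hcen
  · -- interior: 0 < c < n
    have h1c : 1 ≤ c := hc1
    have hecL : ∀ i ∈ Finset.Ico 0 (c - 1),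
        (if g (i + 1) < g i then 1 else 0) = (if f (i + 1) < f i then 1 else 0) := by
      intro i hi; rw [Finset.mem_Ico] at hi
      simp only [hglt i (by omega), hglt (i + 1) (by omega), bump_lt_bump]
    have hecR : (∑ i ∈ Finset.Ico (c + 1) (m + 1), if g (i + 1) < g i then 1 else 0)
        = ∑ i ∈ Finset.Ico c m, if f (i + 1) < f i then 1 else 0 := by
      rw [Finset.sum_Ico_eq_sum_range, Finset.sum_Ico_eq_sum_range,
          show m + 1 - (c + 1) = m - c by omega]
      apply Finset.sum_congr rfl
      intro i hi; rw [Finset.mem_range] at hi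
      have e1 : g (c + 1 + i + 1) = bump (ℓ : ℕ) (f (c + i + 1)) := by
        rw [hggt (c + 1 + i + 1) (by omega) (by omega)]
        congr 2
        omega
      have e2 : g (c + 1 + i) = bump (ℓ : ℕ) (f (c + i)) := by
        rw [hggt (c + 1 + i) (by omega) (by omega)]
        congr 2
        omega
      simp only [e1, e2, bump_lt_bump]
    have hbl : (if g c < g (c - 1) then 1 else 0)
        = (if 1 ≤ c ∧ (ℓ : ℕ) ≤ f (c - 1) then 1 else 0) := by
      have e2 : g (c - 1) = bump (ℓ : ℕ) (f (c - 1)) := hglt _ (by omega)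
      simp only [hgat, e2, lt_bump]
      by_cases hb : (ℓ : ℕ) ≤ f (c - 1)
      · rw [if_pos hb, if_pos ⟨h1c, hb⟩]
      · rw [if_neg hb, if_neg (by tauto)]
    have hbr : (if g (c + 1) < g c then 1 else 0)
        = (if c < m + 1 ∧ f c < (ℓ : ℕ) then 1 else 0) := by
      have e1 : g (c + 1) = bump (ℓ : ℕ) (f c) := by
        rw [hggt (c + 1) (by omega) (by omega), Nat.add_sub_cancel]
      simp only [e1, hgat, bump_lt]
      by_cases hb : f c < (ℓ : ℕ)
      · rw [if_pos hb, if_pos ⟨hcltn, hb⟩]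
      · rw [if_neg hb, if_neg (by tauto)]
    have hold : oldN σ k = (if f c < f (c - 1) then 1 else 0) := by
      simp only [oldN, ← hc, ← hf]
      by_cases hb : f c < f (c - 1)
      · rw [if_pos ⟨h1c, hcltn, hb⟩, if_pos hb]
      · rw [if_neg (by tauto), if_neg hb]
    have hnewd : newN σ k ℓ = (if 1 ≤ c ∧ (ℓ : ℕ) ≤ f (c - 1) then 1 else 0) +
        (if c < m + 1 ∧ f c < (ℓ : ℕ) then 1 else 0) := by
      simp only [newN, ← hc, ← hf]
    rw [Finset.range_eq_Ico, Finset.range_eq_Ico,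
        ← Finset.sum_Ico_consecutive (fun i => if g (i + 1) < g i then 1 else 0)
          (show 0 ≤ c - 1 by omega) (show c - 1 ≤ m + 1 by omega),
        ← Finset.sum_Ico_consecutive (fun i => if f (i + 1) < f i then 1 else 0)
          (show 0 ≤ c - 1 by omega) (show c - 1 ≤ m by omega),
        Finset.sum_eq_sum_Ico_succ_bot (show c - 1 < m + 1 by omega)
          (fun i => if g (i + 1) < g i then 1 else 0),
        Finset.sum_eq_sum_Ico_succ_bot (show c - 1 < m by omega)
          (fun i => if f (i + 1) < f i then 1 else 0),
        show c - 1 + 1 = c by omega,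
        Finset.sum_eq_sum_Ico_succ_bot (show c < m + 1 by omega)
          (fun i => if g (i + 1) < g i then 1 else 0)]
    rw [Finset.sum_congr rfl hecL, hecR, hbl, hbr, hold, hnewd]
    omega
  · -- c = n
    have hceq : c = m + 1 := by omega
    rw [Finset.sum_range_succ]
    have e1 : ∀ i ∈ Finset.range m,
        (if g (i + 1) < g i then 1 else 0) = (if f (i + 1) < f i then 1 else 0) := by
      intro i hi
      rw [Finset.mem_range] at hi
      simp only [hglt i (by omega), hglt (i + 1) (by omega), bump_lt_bump]
    rw [Finset.sum_congr rfl e1]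
    have elast : (if g (m + 1) < g m then 1 else 0)
        = (if (ℓ : ℕ) ≤ f m then 1 else 0) := by
      have h1 : g (m + 1) = (ℓ : ℕ) := by rw [hceq] at hgat; exact hgat
      have h2 : g m = bump (ℓ : ℕ) (f m) := hglt m (by omega)
      simp only [h1, h2, lt_bump]
    rw [elast]
    have hnew : newN σ k ℓ = (if (ℓ : ℕ) ≤ f m then 1 else 0) := by
      simp only [newN, ← hc, hceq, ← hf, Nat.add_sub_cancel]
      rw [if_neg (show ¬((m + 1 : ℕ) < m + 1 ∧ f (m + 1) < (ℓ : ℕ)) by omega), Nat.add_zero]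
      by_cases hb : (ℓ : ℕ) ≤ f m
      · rw [if_pos (⟨by omega, hb⟩ : 1 ≤ m + 1 ∧ (ℓ : ℕ) ≤ f m), if_pos hb]
      · rw [if_neg (show ¬(1 ≤ m + 1 ∧ (ℓ : ℕ) ≤ f m) by tauto), if_neg hb]
    have hold : oldN σ k = 0 := by
      simp only [oldN, ← hc, hceq]
      rw [if_neg (by omega)]
    rw [hnew, hold]
    omega

lemma cond_iff {n : ℕ} (σ : Equiv.Perm (Fin n)) (k ℓ : Fin (n + 1)) :
    descNum (insertPerm σ k ℓ) = descNum σ + 1 ↔ newN σ k ℓ = oldN σ k + 1 := by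
  have := key σ k ℓ
  omega

/-- `newN` as a function of natural numbers -/
def newNx {n : ℕ} (σ : Equiv.Perm (Fin n)) (c x : ℕ) : ℕ :=
  (if 1 ≤ c ∧ x ≤ wd σ (c - 1) then 1 else 0) +
  (if c < n ∧ wd σ c < x then 1 else 0)

def oldNx {n : ℕ} (σ : Equiv.Perm (Fin n)) (c : ℕ) : ℕ :=
  if 1 ≤ c ∧ c < n ∧ wd σ c < wd σ (c - 1) then 1 else 0

lemma newN_eq {n : ℕ} (σ : Equiv.Perm (Fin n)) (k ℓ : Fin (n + 1)) :
    newN σ k ℓ = newNx σ (k : ℕ) (ℓ : ℕ) := rfl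

lemma oldN_eq {n : ℕ} (σ : Equiv.Perm (Fin n)) (k : Fin (n + 1)) :
    oldN σ k = oldNx σ (k : ℕ) := rfl

lemma card_fin_filter (m : ℕ) (Q : ℕ → Prop) [DecidablePred Q] :
    ((Finset.univ.filter fun ℓ : Fin m => Q (ℓ : ℕ))).card = ((Finset.range m).filter Q).card := by
  refine Finset.card_bij (fun ℓ _ => (ℓ : ℕ)) ?_ ?_ ?_
  · intro a ha
    simp only [mem_filter, mem_univ, true_and] at ha
    simp only [mem_filter, mem_range]
    exact ⟨a.isLt, ha⟩
  · intro a _ b _ h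
    exact Fin.ext h
  · intro x hx
    simp only [mem_filter, mem_range] at hx
    exact ⟨⟨x, hx.1⟩, by simp only [mem_filter, mem_univ, true_and]; exact hx.2, rfl⟩

lemma wd_ne {n : ℕ} (σ : Equiv.Perm (Fin n)) {i j : ℕ} (hi : i < n) (hj : j < n)
    (hij : i ≠ j) : wd σ i ≠ wd σ j := by
  simp only [wd, dif_pos hi, dif_pos hj]
  intro h
  have : σ ⟨i, hi⟩ = σ ⟨j, hj⟩ := Fin.ext h
  have := σ.injective this
  exact hij (by simpa [Fin.ext_iff] using this)

/-- per-column count: interior columns -/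
lemma cntI {n : ℕ} (σ : Equiv.Perm (Fin n)) {c : ℕ} (h1 : 1 ≤ c) (h2 : c < n) :
    ((((Finset.range (n + 1)).filter fun x => newNx σ c x = oldNx σ c + 1).card : ℤ))
      = (wd σ (c - 1) : ℤ) - wd σ c + ((n : ℤ) + 1) * (1 - oldNx σ c) := by
  have ha : wd σ (c - 1) < n := wd_lt σ (by omega)
  have hb : wd σ c < n := wd_lt σ h2
  have hab : wd σ (c - 1) ≠ wd σ c := wd_ne σ (by omega) h2 (by omega)
  by_cases hd : wd σ c < wd σ (c - 1)
  · have holdx : oldNx σ c = 1 := if_pos ⟨h1, h2, hd⟩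
    have hiff : ∀ x, (newNx σ c x = oldNx σ c + 1) ↔ (wd σ c < x ∧ x ≤ wd σ (c - 1)) := by
      intro x
      unfold newNx
      rw [holdx]
      split_ifs <;> omega
    have hset : ((Finset.range (n + 1)).filter fun x => newNx σ c x = oldNx σ c + 1)
        = Finset.Ioc (wd σ c) (wd σ (c - 1)) := by
      ext x
      simp only [mem_filter, mem_range, Finset.mem_Ioc, hiff]
      omega
    rw [hset, Nat.card_Ioc, holdx]
    push_cast [Nat.le_of_lt hd]
    ring
  · have hd' : wd σ (c - 1) < wd σ c := by omega
    have holdx : oldNx σ c = 0 := if_neg (by tauto)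
    have hiff : ∀ x, (newNx σ c x = oldNx σ c + 1) ↔ (x ≤ wd σ (c - 1) ∨ wd σ c < x) := by
      intro x
      unfold newNx
      rw [holdx]
      split_ifs <;> omega
    have hset : ((Finset.range (n + 1)).filter fun x => newNx σ c x = oldNx σ c + 1)
        = Finset.range (wd σ (c - 1) + 1) ∪ Finset.Ioc (wd σ c) n := by
      ext x
      simp only [mem_filter, mem_range, Finset.mem_union, Finset.mem_Ioc, hiff]
      omega
    rw [hset, Finset.card_union_of_disjoint, Nat.card_Ioc, Finset.card_range, holdx]
    · push_cast [Nat.le_of_lt hb]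
      ring
    · rw [Finset.disjoint_left]
      intro x hx hx'
      simp only [mem_range] at hx
      simp only [Finset.mem_Ioc] at hx'
      omega

/-- per-column count: column 0 -/
lemma cnt0 {n : ℕ} (σ : Equiv.Perm (Fin n)) (hn : 0 < n) :
    ((((Finset.range (n + 1)).filter fun x => newNx σ 0 x = oldNx σ 0 + 1).card : ℤ))
      = (n : ℤ) - wd σ 0 := by
  have hb : wd σ 0 < n := wd_lt σ hn
  have holdx : oldNx σ 0 = 0 := if_neg (by omega)
  have hiff : ∀ x, (newNx σ 0 x = oldNx σ 0 + 1) ↔ (wd σ 0 < x) := by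
    intro x
    unfold newNx
    rw [holdx]
    split_ifs <;> omega
  have hset : ((Finset.range (n + 1)).filter fun x => newNx σ 0 x = oldNx σ 0 + 1)
      = Finset.Ioc (wd σ 0) n := by
    ext x
    simp only [mem_filter, mem_range, Finset.mem_Ioc, hiff]
    omega
  rw [hset, Nat.card_Ioc]
  push_cast [Nat.le_of_lt hb]
  ring

/-- per-column count: column n -/
lemma cntn {n : ℕ} (σ : Equiv.Perm (Fin n)) (hn : 0 < n) :
    ((((Finset.range (n + 1)).filter fun x => newNx σ n x = oldNx σ n + 1).card : ℤ))
      = (wd σ (n - 1) : ℤ) + 1 := by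
  have ha : wd σ (n - 1) < n := wd_lt σ (by omega)
  have holdx : oldNx σ n = 0 := if_neg (by omega)
  have hiff : ∀ x, (newNx σ n x = oldNx σ n + 1) ↔ (x ≤ wd σ (n - 1)) := by
    intro x
    unfold newNx
    rw [holdx]
    split_ifs <;> omega
  have hset : ((Finset.range (n + 1)).filter fun x => newNx σ n x = oldNx σ n + 1)
      = Finset.range (wd σ (n - 1) + 1) := by
    ext x
    simp only [mem_filter, mem_range, hiff]
    omega
  rw [hset, Finset.card_range]
  push_cast
  ring

lemma descNum_zero (σ : Equiv.Perm (Fin 0)) : descNum σ = 0 := by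
  rw [descNum_eq_card]; simp


/-- Out of the `(n+1)²` insertion cells, exactly `(n+1)(n - D_n)` produce descent
increment `+1`. -/
theorem stmt_13 (n : ℕ) (σ : Equiv.Perm (Fin n)) :
    ((Finset.univ.filter fun c : Fin (n + 1) × Fin (n + 1) =>
        descNum (insertPerm σ c.1 c.2) = descNum σ + 1).card : ℤ) =
      ((n : ℤ) + 1) * ((n : ℤ) - descNum σ) := by
  have hcond : (Finset.univ.filter fun c : Fin (n + 1) × Fin (n + 1) =>
      descNum (insertPerm σ c.1 c.2) = descNum σ + 1)
      = (Finset.univ.filter fun c : Fin (n + 1) × Fin (n + 1) =>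
        newNx σ (c.1 : ℕ) (c.2 : ℕ) = oldNx σ (c.1 : ℕ) + 1) := by
    apply Finset.filter_congr
    intro c _
    exact (cond_iff σ c.1 c.2).trans (by rw [newN_eq, oldN_eq])
  rw [hcond]
  have hsum : (Finset.univ.filter fun c : Fin (n + 1) × Fin (n + 1) =>
        newNx σ (c.1 : ℕ) (c.2 : ℕ) = oldNx σ (c.1 : ℕ) + 1).card
      = ∑ k : Fin (n + 1), ((Finset.range (n + 1)).filter
          fun x => newNx σ (k : ℕ) x = oldNx σ (k : ℕ) + 1).card := by
    rw [Finset.card_filter, Fintype.sum_prod_type]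
    refine Finset.sum_congr rfl fun k _ => ?_
    rw [← card_fin_filter (n + 1) (fun x => newNx σ (k : ℕ) x = oldNx σ (k : ℕ) + 1),
        Finset.card_filter]
  rw [hsum,
      Fin.sum_univ_eq_sum_range (fun c => ((Finset.range (n + 1)).filter
        fun x => newNx σ c x = oldNx σ c + 1).card) (n + 1)]
  rcases Nat.eq_zero_or_pos n with rfl | hn
  · rw [descNum_zero]
    simp [newNx, oldNx]
  obtain ⟨m, rfl⟩ : ∃ m, n = m + 1 := ⟨n - 1, by omega⟩
  push_cast
  rw [Finset.sum_range_succ, Finset.sum_range_succ'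
    (fun c => (((Finset.range (m + 1 + 1)).filter
      fun x => newNx σ c x = oldNx σ c + 1).card : ℤ))]
  have hD : (descNum σ : ℤ) = ∑ i ∈ Finset.range m,
      (if wd σ (i + 1) < wd σ i then (1 : ℤ) else 0) := by
    rw [descNum_eq_card, Nat.add_sub_cancel, Finset.card_filter]
    push_cast
    rfl
  have hInt : ∀ i ∈ Finset.range m,
      ((((Finset.range (m + 1 + 1)).filter
        fun x => newNx σ (i + 1) x = oldNx σ (i + 1) + 1).card : ℤ))
      = ((wd σ i : ℤ) - wd σ (i + 1))
        + ((m + 1 : ℤ) + 1) * (1 - (if wd σ (i + 1) < wd σ i then (1 : ℤ) else 0)) := by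
    intro i hi
    rw [Finset.mem_range] at hi
    have := cntI σ (show 1 ≤ i + 1 by omega) (show i + 1 < m + 1 by omega)
    rw [Nat.add_sub_cancel] at this
    rw [this]
    have hox : (oldNx σ (i + 1) : ℤ) = (if wd σ (i + 1) < wd σ i then (1 : ℤ) else 0) := by
      unfold oldNx
      rw [Nat.add_sub_cancel]
      by_cases hb : wd σ (i + 1) < wd σ i
      · rw [if_pos ⟨by omega, by omega, hb⟩, if_pos hb]; rfl
      · rw [if_neg (by tauto), if_neg hb]; rfl
    rw [hox]
    push_cast
    ring
  rw [Finset.sum_congr rfl hInt, Finset.sum_add_distrib,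
      Finset.sum_range_sub' (fun i => (wd σ i : ℤ)) m, ← Finset.mul_sum,
      Finset.sum_sub_distrib, Finset.sum_const, ← hD,
      cnt0 σ (by omega), cntn σ (by omega), Nat.add_sub_cancel]
  simp only [Finset.card_range]
  push_cast
  ring
end

section
/- Let (D_n, D'_n) be the descent and inverse-descent counts of a uniform random permutation, and let F_n be the generated filtration. Then M_n = n·(D_n − (n−1)/2, D'_n − (n−1)/2) is a martingale: E[D_{n+1} | F_n] = D_n + (n − D_n)/(n+1) and E[D'_{n+1} | F_n] = D'_n + (n − D'_n)/(n+1). -/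
open Finset Equiv

section Aux

lemma insertPerm_apply_self {n : ℕ} (σ : Equiv.Perm (Fin n)) (k ℓ : Fin (n+1)) :
    insertPerm σ k ℓ k = ℓ := by
  simp [insertPerm]

lemma insertPerm_apply_succAbove {n : ℕ} (σ : Equiv.Perm (Fin n)) (k ℓ : Fin (n+1)) (i : Fin n) :
    insertPerm σ k ℓ (k.succAbove i) = ℓ.succAbove (σ i) := by
  simp [insertPerm, finSuccEquiv'_succAbove, finSuccEquiv'_symm_some]

lemma insertPerm_inv {n : ℕ} (σ : Equiv.Perm (Fin n)) (k ℓ : Fin (n+1)) :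
    (insertPerm σ k ℓ)⁻¹ = insertPerm σ⁻¹ ℓ k := by
  ext x
  simp [insertPerm, Equiv.Perm.inv_def, Equiv.optionCongr_symm]

lemma descNum_eq_sum {m : ℕ} (π : Equiv.Perm (Fin (m+1))) :
    descNum π = ∑ j : Fin m, if π j.succ < π j.castSucc then 1 else 0 := by
  rw [descNum, ← Finset.card_filter]
  apply Finset.card_bij (fun p hp => (⟨(p.1 : ℕ), by
      simp only [Finset.mem_filter] at hp
      omega⟩ : Fin m))
  · intro p hp
    simp only [Finset.mem_filter, Finset.mem_univ, true_and] at hp ⊢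
    have h1 : Fin.castSucc (⟨(p.1 : ℕ), by omega⟩ : Fin m) = p.1 := by
      apply Fin.ext; simp
    have h2 : Fin.succ (⟨(p.1 : ℕ), by omega⟩ : Fin m) = p.2 := by
      apply Fin.ext; simp [hp.1]
    rw [h1, h2]; exact hp.2
  · intro p hp q hq h
    simp only [Finset.mem_filter, Finset.mem_univ, true_and] at hp hq
    have := congrArg Fin.val h
    simp only at this
    have h1 : p.1 = q.1 := Fin.ext this
    have h2 : p.2 = q.2 := Fin.ext (by omega)
    exact Prod.ext h1 h2
  · intro j hj
    simp only [Finset.mem_filter, Finset.mem_univ, true_and] at hj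
    refine ⟨(j.castSucc, j.succ), ?_, ?_⟩
    · simp only [Finset.mem_filter, Finset.mem_univ, true_and]
      exact ⟨by simp, hj⟩
    · apply Fin.ext; simp

lemma count_gt (N a : ℕ) (_ : a < N) :
    (∑ ℓ : Fin N, if a < (ℓ : ℕ) then (1:ℕ) else 0) = N - (a+1) := by
  rw [Fin.sum_univ_eq_sum_range (fun x => if a < x then (1:ℕ) else 0), ← Finset.card_filter]
  have : (Finset.range N).filter (fun x => a < x) = Finset.Ico (a+1) N := by
    ext x; simp [Finset.mem_filter, Finset.mem_range, Finset.mem_Ico]; omega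
  rw [this, Nat.card_Ico]

lemma count_le (N a : ℕ) (ha : a + 1 ≤ N) :
    (∑ ℓ : Fin N, if (ℓ : ℕ) ≤ a then (1:ℕ) else 0) = a + 1 := by
  rw [Fin.sum_univ_eq_sum_range (fun x => if x ≤ a then (1:ℕ) else 0), ← Finset.card_filter]
  have : (Finset.range N).filter (fun x => x ≤ a) = Finset.range (a+1) := by
    ext x; simp [Finset.mem_filter, Finset.mem_range]; omega
  rw [this, Finset.card_range]

lemma succAbove_lt_left_iff {N : ℕ} (ℓ : Fin (N+1)) (a : Fin N) :
    ℓ.succAbove a < ℓ ↔ (a : ℕ) < (ℓ : ℕ) := by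
  rcases lt_or_ge a.castSucc ℓ with h | h
  · rw [Fin.succAbove_of_castSucc_lt _ _ h]
    simp only [Fin.lt_def, Fin.coe_castSucc, Fin.val_succ] at h ⊢
    all_goals omega
  · rw [Fin.succAbove_of_le_castSucc _ _ h]
    simp only [Fin.le_def, Fin.lt_def, Fin.coe_castSucc, Fin.val_succ] at h ⊢
    all_goals omega

lemma lt_succAbove_right_iff {N : ℕ} (ℓ : Fin (N+1)) (a : Fin N) :
    ℓ < ℓ.succAbove a ↔ (ℓ : ℕ) ≤ (a : ℕ) := by
  rcases lt_or_ge a.castSucc ℓ with h | h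
  · rw [Fin.succAbove_of_castSucc_lt _ _ h]
    simp only [Fin.lt_def, Fin.coe_castSucc, Fin.val_succ] at h ⊢
    all_goals omega
  · rw [Fin.succAbove_of_le_castSucc _ _ h]
    simp only [Fin.le_def, Fin.lt_def, Fin.coe_castSucc, Fin.val_succ] at h ⊢
    all_goals omega

def dm {m : ℕ} (σ : Equiv.Perm (Fin (m+1))) (j : Fin (m+1)) : ℕ :=
  if _ : 0 < (j : ℕ) then
    (if σ j < σ ⟨(j : ℕ) - 1, Nat.lt_of_le_of_lt (Nat.sub_le _ _) j.isLt⟩ then 1 else 0)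
  else 0

def dp {m : ℕ} (σ : Equiv.Perm (Fin (m+1))) (j : Fin (m+1)) : ℕ :=
  if h : (j : ℕ) + 1 < m + 1 then (if σ ⟨(j : ℕ) + 1, h⟩ < σ j then 1 else 0) else 0

lemma g_eq {m : ℕ} (σ : Equiv.Perm (Fin (m+1))) (j : Fin (m+1)) (k : Fin (m+2)) :
    (∑ ℓ : Fin (m+2), if insertPerm σ k ℓ j.succ < insertPerm σ k ℓ j.castSucc then (1:ℕ) else 0)
    = if (k : ℕ) < (j : ℕ) then (m+2) * dm σ j
      else if (k : ℕ) = (j : ℕ) then (m+1) - (σ j : ℕ)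
      else if (k : ℕ) = (j : ℕ) + 1 then (σ j : ℕ) + 1
      else (m+2) * dp σ j := by
  rcases Nat.lt_trichotomy (k : ℕ) (j : ℕ) with hk | hk | hk
  · rw [if_pos hk]
    have hj0 : 0 < (j : ℕ) := by omega
    have e1 : k.succAbove ⟨(j : ℕ) - 1, Nat.lt_of_le_of_lt (Nat.sub_le _ _) j.isLt⟩
        = j.castSucc := by
      rw [Fin.succAbove_of_le_castSucc _ _ (by simp [Fin.le_def]; omega)]
      apply Fin.ext; simp; omega
    have e2 : k.succAbove j = j.succ :=
      Fin.succAbove_of_le_castSucc _ _ (by simp [Fin.le_def]; omega)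
    have v1 : ∀ ℓ : Fin (m+2), insertPerm σ k ℓ j.succ = ℓ.succAbove (σ j) := by
      intro ℓ; rw [← e2, insertPerm_apply_succAbove]
    have v2 : ∀ ℓ : Fin (m+2), insertPerm σ k ℓ j.castSucc
        = ℓ.succAbove (σ ⟨(j : ℕ) - 1, Nat.lt_of_le_of_lt (Nat.sub_le _ _) j.isLt⟩) := by
      intro ℓ; rw [← e1, insertPerm_apply_succAbove]
    simp only [v1, v2, Fin.succAbove_lt_succAbove_iff]
    rw [Finset.sum_const, Finset.card_univ, Fintype.card_fin, smul_eq_mul]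
    rw [dm, dif_pos hj0]
  · rw [if_neg (by omega), if_pos hk]
    have hkc : k = j.castSucc := by apply Fin.ext; simpa using hk
    have e2 : k.succAbove j = j.succ :=
      Fin.succAbove_of_le_castSucc _ _ (by simp [Fin.le_def]; omega)
    have v1 : ∀ ℓ : Fin (m+2), insertPerm σ k ℓ j.succ = ℓ.succAbove (σ j) := by
      intro ℓ; rw [← e2, insertPerm_apply_succAbove]
    have v2 : ∀ ℓ : Fin (m+2), insertPerm σ k ℓ j.castSucc = ℓ := by
      intro ℓ; rw [← hkc, insertPerm_apply_self]
    simp only [v1, v2, succAbove_lt_left_iff]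
    rw [count_gt _ _ (by have := (σ j).isLt; omega)]
    have := (σ j).isLt; omega
  · rcases Nat.eq_or_lt_of_le hk with hk1 | hk1
    · rw [if_neg (by omega), if_neg (by omega), if_pos (by omega)]
      have hkc : k = j.succ := by apply Fin.ext; simp; omega
      have e1 : k.succAbove j = j.castSucc :=
        Fin.succAbove_of_castSucc_lt _ _ (by simp [Fin.lt_def]; omega)
      have v1 : ∀ ℓ : Fin (m+2), insertPerm σ k ℓ j.succ = ℓ := by
        intro ℓ; rw [← hkc, insertPerm_apply_self]
      have v2 : ∀ ℓ : Fin (m+2), insertPerm σ k ℓ j.castSucc = ℓ.succAbove (σ j) := by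
        intro ℓ; rw [← e1, insertPerm_apply_succAbove]
      simp only [v1, v2, lt_succAbove_right_iff]
      rw [count_le _ _ (by have := (σ j).isLt; omega)]
    · rw [if_neg (by omega), if_neg (by omega), if_neg (by omega)]
      have hj1 : (j : ℕ) + 1 < m + 1 := by have := k.isLt; omega
      have e3 : k.succAbove ⟨(j : ℕ) + 1, hj1⟩ = j.succ := by
        rw [Fin.succAbove_of_castSucc_lt _ _ (by simp [Fin.lt_def]; omega)]
        apply Fin.ext; simp
      have e4 : k.succAbove j = j.castSucc :=
        Fin.succAbove_of_castSucc_lt _ _ (by simp [Fin.lt_def]; omega)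
      have v1 : ∀ ℓ : Fin (m+2), insertPerm σ k ℓ j.succ
          = ℓ.succAbove (σ ⟨(j : ℕ) + 1, hj1⟩) := by
        intro ℓ; rw [← e3, insertPerm_apply_succAbove]
      have v2 : ∀ ℓ : Fin (m+2), insertPerm σ k ℓ j.castSucc = ℓ.succAbove (σ j) := by
        intro ℓ; rw [← e4, insertPerm_apply_succAbove]
      simp only [v1, v2, Fin.succAbove_lt_succAbove_iff]
      rw [Finset.sum_const, Finset.card_univ, Fintype.card_fin, smul_eq_mul]
      rw [dp, dif_pos hj1]

lemma range_sum_split (m J A B C Dq : ℕ) (hJ : J ≤ m) :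
    (∑ x ∈ Finset.range (m+2),
      (if x < J then A else if x = J then B else if x = J+1 then C else Dq))
    = J * A + B + C + (m - J) * Dq := by
  have split : ∀ x, (if x < J then A else if x = J then B else if x = J+1 then C else Dq)
      = (if x < J then A else 0) + ((if x = J then B else 0) + ((if x = J+1 then C else 0)
        + (if J+1 < x then Dq else 0))) := by
    intro x; split_ifs <;> omega
  rw [Finset.sum_congr rfl fun x _ => split x]
  rw [Finset.sum_add_distrib, Finset.sum_add_distrib, Finset.sum_add_distrib]
  have s1 : (∑ x ∈ Finset.range (m+2), if x < J then A else 0) = J * A := by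
    rw [← Finset.sum_subset (Finset.range_subset_range.mpr (by omega : J ≤ m+2))
      (fun x _ hx => by rw [if_neg (by simp [Finset.mem_range] at hx; omega)])]
    rw [Finset.sum_congr rfl fun x hx => if_pos (Finset.mem_range.mp hx)]
    simp [mul_comm]
  have s2 : (∑ x ∈ Finset.range (m+2), if x = J then B else 0) = B := by
    rw [Finset.sum_ite_eq' (Finset.range (m+2)) J (fun _ => B),
      if_pos (Finset.mem_range.mpr (by omega))]
  have s3 : (∑ x ∈ Finset.range (m+2), if x = J+1 then C else 0) = C := by
    rw [Finset.sum_ite_eq' (Finset.range (m+2)) (J+1) (fun _ => C),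
      if_pos (Finset.mem_range.mpr (by omega))]
  have s4 : (∑ x ∈ Finset.range (m+2), if J+1 < x then Dq else 0) = (m - J) * Dq := by
    have hsub : Finset.Ico (J+2) (m+2) ⊆ Finset.range (m+2) := by
      intro x hx; simp only [Finset.mem_Ico] at hx; exact Finset.mem_range.mpr (by omega)
    rw [← Finset.sum_subset hsub
      (fun x hx hnx => by
        rw [if_neg]; simp only [Finset.mem_range] at hx; simp only [Finset.mem_Ico] at hnx; omega)]
    rw [Finset.sum_congr rfl fun x hx => if_pos (by simp only [Finset.mem_Ico] at hx; omega)]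
    rw [Finset.sum_const, Nat.card_Ico, smul_eq_mul]
    congr 1; omega
  rw [s1, s2, s3, s4]; ring

lemma sum_k {m : ℕ} (σ : Equiv.Perm (Fin (m+1))) (j : Fin (m+1)) :
    (∑ k : Fin (m+2), ∑ ℓ : Fin (m+2),
      if insertPerm σ k ℓ j.succ < insertPerm σ k ℓ j.castSucc then (1:ℕ) else 0)
    = (m+2) + (m+2) * ((j : ℕ) * dm σ j + (m - (j : ℕ)) * dp σ j) := by
  rw [Finset.sum_congr rfl fun k _ => g_eq σ j k]
  rw [Fin.sum_univ_eq_sum_range (fun x => if x < (j : ℕ) then (m+2) * dm σ j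
      else if x = (j : ℕ) then (m+1) - (σ j : ℕ)
      else if x = (j : ℕ) + 1 then (σ j : ℕ) + 1
      else (m+2) * dp σ j)]
  rw [range_sum_split m (j : ℕ) _ _ _ _ (by have := j.isLt; omega)]
  have h1 : (m+1) - (σ j : ℕ) + ((σ j : ℕ) + 1) = m + 2 := by have := (σ j).isLt; omega
  have h2 : (j : ℕ) * ((m+2) * dm σ j) + ((m+1) - (σ j : ℕ)) + ((σ j : ℕ) + 1)
        + (m - (j : ℕ)) * ((m+2) * dp σ j)
      = ((m+1) - (σ j : ℕ) + ((σ j : ℕ) + 1))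
        + (m+2) * ((j : ℕ) * dm σ j + (m - (j : ℕ)) * dp σ j) := by ring
  rw [h2, h1]

lemma dm_succ {m : ℕ} (σ : Equiv.Perm (Fin (m+1))) (i : Fin m) :
    dm σ i.succ = if σ i.succ < σ i.castSucc then 1 else 0 := by
  rw [dm, dif_pos (by simp)]
  have hmk : (⟨((i.succ : Fin (m+1)) : ℕ) - 1,
      Nat.lt_of_le_of_lt (Nat.sub_le _ _) (i.succ).isLt⟩ : Fin (m+1)) = i.castSucc := by
    apply Fin.ext; simp
  rw [hmk]

lemma dp_castSucc {m : ℕ} (σ : Equiv.Perm (Fin (m+1))) (i : Fin m) :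
    dp σ i.castSucc = if σ i.succ < σ i.castSucc then 1 else 0 := by
  have h : ((i.castSucc : Fin (m+1)) : ℕ) + 1 < m + 1 := by
    simp only [Fin.coe_castSucc]; omega
  rw [dp, dif_pos h]
  have hmk : (⟨((i.castSucc : Fin (m+1)) : ℕ) + 1, h⟩ : Fin (m+1)) = i.succ := by
    apply Fin.ext; simp
  rw [hmk]

lemma sum_j {m : ℕ} (σ : Equiv.Perm (Fin (m+1))) :
    (∑ j : Fin (m+1), ((m+2) + (m+2) * ((j : ℕ) * dm σ j + (m - (j : ℕ)) * dp σ j)))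
    = (m+2) * ((m+1) * descNum σ + (m+1)) := by
  rw [Finset.sum_add_distrib, Finset.sum_const, Finset.card_univ, Fintype.card_fin,
    smul_eq_mul, ← Finset.mul_sum, Finset.sum_add_distrib]
  have hdm : (∑ j : Fin (m+1), (j : ℕ) * dm σ j)
      = ∑ i : Fin m, ((i : ℕ) + 1) * (if σ i.succ < σ i.castSucc then 1 else 0) := by
    rw [Fin.sum_univ_succ]
    simp only [Fin.val_zero, zero_mul, zero_add]
    exact Finset.sum_congr rfl fun i _ => by rw [dm_succ]; simp
  have hdp : (∑ j : Fin (m+1), (m - (j : ℕ)) * dp σ j)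
      = ∑ i : Fin m, (m - (i : ℕ)) * (if σ i.succ < σ i.castSucc then 1 else 0) := by
    rw [Fin.sum_univ_castSucc]
    simp only [Fin.val_last, Nat.sub_self, zero_mul, add_zero]
    exact Finset.sum_congr rfl fun i _ => by rw [dp_castSucc]; simp
  rw [hdm, hdp, ← Finset.sum_add_distrib]
  have hcomb : (∑ i : Fin m, (((i : ℕ) + 1) * (if σ i.succ < σ i.castSucc then 1 else 0)
        + (m - (i : ℕ)) * (if σ i.succ < σ i.castSucc then 1 else 0)))
      = (m+1) * descNum σ := by
    rw [descNum_eq_sum, Finset.mul_sum]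
    apply Finset.sum_congr rfl
    intro i _
    rw [← add_mul]
    congr 1
    have := i.isLt; omega
  rw [hcomb]
  ring

end Aux

lemma main_nat (n : ℕ) (σ : Equiv.Perm (Fin n)) :
    (∑ c : Fin (n+1) × Fin (n+1), descNum (insertPerm σ c.1 c.2))
    = (n+1) * (n * descNum σ + n) := by
  cases n with
  | zero =>
    have hσ : σ = 1 := by ext x; exact x.elim0
    subst hσ
    decide
  | succ m =>
    rw [Fintype.sum_prod_type]
    have step1 : ∀ k : Fin (m+2), (∑ ℓ : Fin (m+2), descNum (insertPerm σ k ℓ))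
        = ∑ j : Fin (m+1), ∑ ℓ : Fin (m+2),
          (if insertPerm σ k ℓ j.succ < insertPerm σ k ℓ j.castSucc then (1:ℕ) else 0) := by
      intro k
      rw [Finset.sum_congr rfl fun ℓ _ => descNum_eq_sum (insertPerm σ k ℓ)]
      exact Finset.sum_comm
    rw [Finset.sum_congr rfl fun k _ => step1 k, Finset.sum_comm]
    rw [Finset.sum_congr rfl fun j _ => sum_k σ j]
    exact sum_j σ

lemma main_nat_inv (n : ℕ) (σ : Equiv.Perm (Fin n)) :
    (∑ c : Fin (n+1) × Fin (n+1), descNum (insertPerm σ c.1 c.2)⁻¹)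
    = (n+1) * (n * descNum σ⁻¹ + n) := by
  have h1 : (∑ c : Fin (n+1) × Fin (n+1), descNum (insertPerm σ c.1 c.2)⁻¹)
      = ∑ c : Fin (n+1) × Fin (n+1), descNum (insertPerm σ⁻¹ c.1 c.2) := by
    refine Fintype.sum_equiv (Equiv.prodComm _ _) _ _ fun c => ?_
    rw [insertPerm_inv]
    rfl
  rw [h1, main_nat]


/-- Conditional expectations of the descent and inverse-descent counts after a uniform
insertion, and the resulting martingale property of `M_n = n (D_n - (n-1)/2, D'_n - (n-1)/2)`. -/
theorem stmt_14 (n : ℕ) (σ : Equiv.Perm (Fin n)) :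
    (∑ c : Fin (n + 1) × Fin (n + 1), (descNum (insertPerm σ c.1 c.2) : ℝ)) / (n + 1) ^ 2 =
        descNum σ + ((n : ℝ) - descNum σ) / (n + 1) ∧
    (∑ c : Fin (n + 1) × Fin (n + 1), (descNum (insertPerm σ c.1 c.2)⁻¹ : ℝ)) / (n + 1) ^ 2 =
        descNum σ⁻¹ + ((n : ℝ) - descNum σ⁻¹) / (n + 1) ∧
    (∑ c : Fin (n + 1) × Fin (n + 1),
        ((n : ℝ) + 1) * ((descNum (insertPerm σ c.1 c.2) : ℝ) - n / 2)) / (n + 1) ^ 2 =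
      (n : ℝ) * ((descNum σ : ℝ) - ((n : ℝ) - 1) / 2) ∧
    (∑ c : Fin (n + 1) × Fin (n + 1),
        ((n : ℝ) + 1) * ((descNum (insertPerm σ c.1 c.2)⁻¹ : ℝ) - n / 2)) / (n + 1) ^ 2 =
      (n : ℝ) * ((descNum σ⁻¹ : ℝ) - ((n : ℝ) - 1) / 2) := by
  have hn : ((n : ℝ) + 1) ≠ 0 := by positivity
  have hS : (∑ c : Fin (n + 1) × Fin (n + 1), (descNum (insertPerm σ c.1 c.2) : ℝ))
      = ((n : ℝ) + 1) * ((n : ℝ) * (descNum σ : ℝ) + n) := by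
    rw [← Nat.cast_sum, main_nat]
    push_cast; ring
  have hS' : (∑ c : Fin (n + 1) × Fin (n + 1), (descNum (insertPerm σ c.1 c.2)⁻¹ : ℝ))
      = ((n : ℝ) + 1) * ((n : ℝ) * (descNum σ⁻¹ : ℝ) + n) := by
    rw [← Nat.cast_sum, main_nat_inv]
    push_cast; ring
  have hT : (∑ c : Fin (n + 1) × Fin (n + 1),
        ((n : ℝ) + 1) * ((descNum (insertPerm σ c.1 c.2) : ℝ) - n / 2))
      = ((n : ℝ) + 1) * ((∑ c : Fin (n + 1) × Fin (n + 1),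
          (descNum (insertPerm σ c.1 c.2) : ℝ)) - ((n : ℝ)+1)^2 * ((n : ℝ)/2)) := by
    simp only [mul_sub]
    rw [Finset.sum_sub_distrib, ← Finset.mul_sum, Finset.sum_const, Finset.card_univ,
      Fintype.card_prod, Fintype.card_fin, nsmul_eq_mul]
    push_cast; ring
  have hT' : (∑ c : Fin (n + 1) × Fin (n + 1),
        ((n : ℝ) + 1) * ((descNum (insertPerm σ c.1 c.2)⁻¹ : ℝ) - n / 2))
      = ((n : ℝ) + 1) * ((∑ c : Fin (n + 1) × Fin (n + 1),
          (descNum (insertPerm σ c.1 c.2)⁻¹ : ℝ)) - ((n : ℝ)+1)^2 * ((n : ℝ)/2)) := by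
    simp only [mul_sub]
    rw [Finset.sum_sub_distrib, ← Finset.mul_sum, Finset.sum_const, Finset.card_univ,
      Fintype.card_prod, Fintype.card_fin, nsmul_eq_mul]
    push_cast; ring
  refine ⟨?_, ?_, ?_, ?_⟩
  · rw [hS]; field_simp; ring
  · rw [hS']; field_simp; ring
  · rw [hT, hS]; field_simp; ring
  · rw [hT', hS']; field_simp; ring
end
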